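/- Let x₁, …, x_n be i.i.d. N(μ, σ²) with σ > 0 and let y_i = 1{x_i > 0}⌈x_i⌉. Then for all δ > 0 there exists N such that for all n > N, P[max_{1≤i≤n} y_i < σ·(2δ/√(log n) + √(2 log n)) + μ + 1] > exp(-e^{-δ/2}). -/

import Mathlib

open MeasureTheory ProbabilityTheory Real

namespace Stmt19Aux

open Set


lemma gauss_map_refl (m : ℝ) (v : NNReal) :
    (gaussianReal m v).map (fun x => -x + 2*m) = gaussianReal m v := by
  have h1 : (fun x : ℝ => -x + 2*m) = (fun x : ℝ => x + 2*m) ∘ (fun x : ℝ => (-1) * x) := by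
    funext x; simp
  rw [h1, ← Measure.map_map (measurable_id'.add_const _) (measurable_id'.const_mul _),
    gaussianReal_map_const_mul]
  have h1v : NNReal.mk ((-1:ℝ)^2) (sq_nonneg _) = 1 := by ext; norm_num
  rw [h1v, one_mul]
  have h2 : (gaussianReal ((-1) * m) v).map (· + 2*m) = gaussianReal ((-1)*m + 2*m) v :=
    gaussianReal_map_add_const _
  rw [show (fun x : ℝ => x + 2*m) = (· + 2*m) from rfl, h2]
  congr 1
  ring

lemma gauss_Ici_half (m : ℝ) {v : NNReal} (hv : v ≠ 0) :
    gaussianReal m v (Ici m) = 1/2 := by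
  have hsym : gaussianReal m v (Iic m) = gaussianReal m v (Ici m) := by
    conv_lhs => rw [← gauss_map_refl m v]
    rw [Measure.map_apply (by fun_prop) measurableSet_Iic]
    congr 1
    ext z
    simp only [mem_preimage, mem_Iic, mem_Ici]
    constructor <;> intro <;> linarith
  have hsing : gaussianReal m v {m} = 0 :=
    gaussianReal_absolutelyContinuous m hv (volume_singleton)
  have hio : gaussianReal m v (Iio m) = gaussianReal m v (Iic m) := by
    refine le_antisymm (measure_mono Iio_subset_Iic_self) ?_
    calc gaussianReal m v (Iic m) = gaussianReal m v ({m} ∪ Iio m) := by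
          rw [← Set.Iio_insert, Set.insert_eq]
      _ ≤ gaussianReal m v {m} + gaussianReal m v (Iio m) := measure_union_le _ _
      _ = gaussianReal m v (Iio m) := by rw [hsing, zero_add]
  have hcompl : gaussianReal m v (Ici m) + gaussianReal m v (Iio m) = 1 := by
    have := measure_add_measure_compl (μ := gaussianReal m v) (measurableSet_Ici (a := m))
    rwa [compl_Ici, measure_univ] at this
  have h2 : gaussianReal m v (Iio m) = gaussianReal m v (Ici m) := hio.trans hsym
  rw [h2] at hcompl
  have hx : 2 * gaussianReal m v (Ici m) = 1 := by rw [two_mul]; exact hcompl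
  refine (ENNReal.eq_div_iff (by norm_num) (by norm_num)).mpr hx

lemma gauss_tail {m a : ℝ} {v : NNReal} (hv : v ≠ 0) (ha : m ≤ a) :
    gaussianReal m v (Ici a) ≤ ENNReal.ofReal ((1/2) * Real.exp (-(a-m)^2 / (2*(v:ℝ)))) := by
  have hvR : (0:ℝ) < (v:ℝ) := lt_of_le_of_ne v.coe_nonneg (Ne.symm (NNReal.coe_ne_zero.mpr hv))
  set c : ℝ := a - m with hc
  have hc0 : 0 ≤ c := sub_nonneg.mpr ha
  set E : ℝ := Real.exp (-(a-m)^2 / (2*(v:ℝ))) with hE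
  have hE0 : 0 < E := Real.exp_pos _
  have hmg : Measurable fun z : ℝ => gaussianPDF m v (z - c) :=
    (measurable_gaussianPDF m v).comp (measurable_id.sub measurable_const)
  have hpt : ∀ z ∈ Ici a, gaussianPDF m v z ≤ ENNReal.ofReal E * gaussianPDF m v (z - c) := by
    intro z hz
    rw [gaussianPDF, gaussianPDF, ← ENNReal.ofReal_mul hE0.le]
    apply ENNReal.ofReal_le_ofReal
    rw [gaussianPDFReal, gaussianPDFReal]
    rw [show z - c - m = z - a by rw [hc]; ring]
    rw [show E * ((√(2 * π * ↑v))⁻¹ * rexp (-(z - a) ^ 2 / (2 * ↑v)))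
        = (√(2 * π * ↑v))⁻¹ * (E * rexp (-(z - a) ^ 2 / (2 * ↑v))) by ring]
    apply mul_le_mul_of_nonneg_left _ (by positivity)
    rw [hE, ← Real.exp_add, Real.exp_le_exp, ← add_div, div_le_div_iff_of_pos_right (by positivity)]
    have hz' : a ≤ z := hz
    nlinarith [mul_nonneg (sub_nonneg.mpr hz') (sub_nonneg.mpr ha)]
  calc gaussianReal m v (Ici a) = ∫⁻ z in Ici a, gaussianPDF m v z := by
        rw [gaussianReal_apply _ hv]
    _ ≤ ∫⁻ z in Ici a, ENNReal.ofReal E * gaussianPDF m v (z - c) :=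
        setLIntegral_mono (hmg.const_mul _) hpt
    _ = ENNReal.ofReal E * ∫⁻ z in Ici a, gaussianPDF m v (z - c) :=
        lintegral_const_mul _ hmg
    _ = ENNReal.ofReal E * gaussianReal m v (Ici m) := by
        congr 1
        have hpre : (fun z : ℝ => z - c) ⁻¹' (Ici m) = Ici a := by
          ext z
          simp only [mem_preimage, mem_Ici, hc]
          constructor <;> intro <;> linarith
        rw [← hpre, (measurePreserving_sub_right volume c).setLIntegral_comp_preimage
          measurableSet_Ici (measurable_gaussianPDF m v), gaussianReal_apply _ hv]
    _ = ENNReal.ofReal ((1/2) * E) := by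
        rw [gauss_Ici_half m hv, ENNReal.ofReal_mul (by norm_num), mul_comm]
        congr 1
        rw [eq_comm, one_div, ENNReal.ofReal_inv_of_pos (by norm_num)]
        norm_num

end Stmt19Aux

open Stmt19Aux Set


set_option maxHeartbeats 2000000 in
/-- For i.i.d. `x_i ∼ N(μ, σ²)` with `σ > 0` and
`y_i = 1{x_i > 0}⌈x_i⌉`, for every `δ > 0` there is `N` such that for all `n > N`,
`P[max_{1≤i≤n} y_i < σ(2δ/√(log n) + √(2 log n)) + μ + 1] > exp(-e^{-δ/2})`. -/
theorem stmt19 {Ω : Type*} [MeasurableSpace Ω] (P : Measure Ω) [IsProbabilityMeasure P]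
    (μ σ : ℝ) (hσ : 0 < σ)
    (x : ℕ → Ω → ℝ) (hmeas : ∀ i, Measurable (x i))
    (hindep : iIndepFun x P)
    (hlaw : ∀ i, Measure.map (x i) P = gaussianReal μ (⟨σ ^ 2, sq_nonneg σ⟩ : NNReal))
    (y : ℕ → Ω → ℝ)
    (hy : ∀ i ω, y i ω = if 0 < x i ω then (⌈x i ω⌉ : ℝ) else 0) :
    ∀ δ > (0 : ℝ), ∃ N : ℕ, ∀ n > N,
      P {ω | ∀ i < n, y i ω
          < σ * (2 * δ / Real.sqrt (Real.log n) + Real.sqrt (2 * Real.log n)) + μ + 1}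
        > ENNReal.ofReal (Real.exp (-Real.exp (-δ / 2))) := by
  intro δ hδ
  set K : ℝ := ((|μ|+1)/σ)^2/2 with hKdef
  refine ⟨max 1 ⌈Real.exp K⌉₊, ?_⟩
  intro n hn
  have hn1 : 1 < n := lt_of_le_of_lt (le_max_left _ _) hn
  have hn0 : (0:ℝ) < n := by positivity
  have hnR : (1:ℝ) < n := by exact_mod_cast hn1
  have hL : 0 < Real.log n := Real.log_pos hnR
  have hKlt : K < Real.log n := by
    have h1 : Real.exp K < n := by
      calc Real.exp K ≤ (⌈Real.exp K⌉₊ : ℝ) := Nat.le_ceil _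
        _ ≤ ((max 1 ⌈Real.exp K⌉₊ : ℕ) : ℝ) := by exact_mod_cast le_max_right _ _
        _ < n := by exact_mod_cast hn
    calc K = Real.log (Real.exp K) := (Real.log_exp _).symm
      _ < Real.log n := Real.log_lt_log (Real.exp_pos _) h1
  set L : ℝ := Real.log n with hLdef
  have hsL : 0 < Real.sqrt L := Real.sqrt_pos.mpr hL
  set c : ℝ := 2*δ/Real.sqrt L + Real.sqrt (2*L) with hcdef
  have hc0 : 0 ≤ c := by positivity
  set a : ℝ := σ * c + μ with hadef
  have hma : μ ≤ a := by nlinarith [mul_nonneg hσ.le hc0]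
  -- positivity of a + 1
  have hc_lower : |μ| + 1 < σ * c := by
    have h2K : Real.sqrt (2*K) = (|μ|+1)/σ := by
      rw [show 2*K = ((|μ|+1)/σ)^2 by rw [hKdef]; ring, Real.sqrt_sq (by positivity)]
    have hKL : Real.sqrt (2*K) < Real.sqrt (2*L) :=
      Real.sqrt_lt_sqrt (by positivity) (by linarith)
    have hd0 : 0 ≤ 2*δ/Real.sqrt L := by positivity
    calc |μ|+1 = σ * ((|μ|+1)/σ) := by field_simp
      _ < σ * Real.sqrt (2*L) := by
          apply mul_lt_mul_of_pos_left _ hσ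
          rw [← h2K]; exact hKL
      _ ≤ σ * c := by
          apply mul_le_mul_of_nonneg_left _ hσ.le
          rw [hcdef]; linarith
  have hapos : 0 < a + 1 := by
    have := neg_abs_le μ
    rw [hadef]; linarith
  -- event inclusion
  have hsub : (⋂ i ∈ Finset.range n, x i ⁻¹' (Iio a)) ⊆
      {ω | ∀ i < n, y i ω < a + 1} := by
    intro ω hω i hi
    have hxi : x i ω < a := by
      have h := Set.mem_iInter₂.mp hω i (Finset.mem_range.mpr hi)
      exact h
    rw [hy i ω]
    split_ifs with h
    · calc (⌈x i ω⌉ : ℝ) < x i ω + 1 := Int.ceil_lt_add_one _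
        _ < a + 1 := by linarith
    · exact hapos
  -- law / variance
  set v : NNReal := (⟨σ ^ 2, sq_nonneg σ⟩ : NNReal) with hvdef
  have hvR : (v : ℝ) = σ^2 := rfl
  have hvne : v ≠ 0 := by
    intro h
    have : (v : ℝ) = 0 := by rw [h]; rfl
    rw [hvR] at this
    nlinarith
  -- product formula
  have hprod : P (⋂ i ∈ Finset.range n, x i ⁻¹' (Iio a))
      = ∏ i ∈ Finset.range n, P (x i ⁻¹' (Iio a)) :=
    hindep.meas_biInter (fun i _ => ⟨Iio a, measurableSet_Iio, rfl⟩)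
  have hmarg : ∀ i, P (x i ⁻¹' (Iio a)) = gaussianReal μ v (Iio a) := by
    intro i
    rw [← hlaw i, Measure.map_apply (hmeas i) measurableSet_Iio]
  -- real bounds
  set B : ℝ := (1/2) * Real.exp (-(c^2)/2) with hBdef
  have hexp_eq : -(a-μ)^2 / (2*(v:ℝ)) = -(c^2)/2 := by
    rw [hvR, hadef]
    field_simp
    ring
  have htail : gaussianReal μ v (Ici a) ≤ ENNReal.ofReal B := by
    have := gauss_tail hvne hma
    rwa [hexp_eq] at this
  have hB0 : 0 < B := by positivity
  have hB1 : B ≤ 1/2 := by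
    rw [hBdef]
    have : Real.exp (-(c^2)/2) ≤ 1 := Real.exp_le_one_iff.mpr (by nlinarith)
    nlinarith
  -- c^2/2 computation
  have hc2 : L + 2*Real.sqrt 2*δ ≤ c^2/2 := by
    have hsq2 : Real.sqrt (2*L) = Real.sqrt 2 * Real.sqrt L := Real.sqrt_mul (by norm_num) L
    have hb2 : Real.sqrt (2*L)^2 = 2*L := Real.sq_sqrt (by positivity)
    have hdb : (2*δ/Real.sqrt L) * Real.sqrt (2*L) = 2*Real.sqrt 2*δ := by
      rw [hsq2]; field_simp
    have hexpand : c^2 = (2*δ/Real.sqrt L)^2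
        + 2*((2*δ/Real.sqrt L)*Real.sqrt (2*L)) + Real.sqrt (2*L)^2 := by
      rw [hcdef]; ring
    rw [hdb, hb2] at hexpand
    have hd2 : 0 ≤ (2*δ/Real.sqrt L)^2 := sq_nonneg _
    linarith [hexpand]
  have hnB : (n:ℝ) * B < Real.exp (-δ/2) / 2 := by
    have hs2 : (1:ℝ) ≤ Real.sqrt 2 := by
      rw [show (1:ℝ) = Real.sqrt 1 by rw [Real.sqrt_one]]
      exact Real.sqrt_le_sqrt (by norm_num)
    have hd2 : 0 < 2*δ^2/L := by positivity
    have hlt : -(c^2)/2 < -L + (-δ/2) := by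
      have hh : δ/2 < 2*Real.sqrt 2*δ := by nlinarith
      linarith [hc2]
    have hexp : Real.exp (-(c^2)/2) < Real.exp (-L) * Real.exp (-δ/2) := by
      rw [← Real.exp_add]
      exact Real.exp_lt_exp.mpr hlt
    have hexpL : Real.exp (-L) = 1/(n:ℝ) := by
      rw [hLdef, Real.exp_neg, Real.exp_log hn0, one_div]
    rw [hBdef]
    rw [hexpL] at hexp
    calc (n:ℝ) * ((1/2) * Real.exp (-(c^2)/2))
        < (n:ℝ) * ((1/2) * (1/(n:ℝ) * Real.exp (-δ/2))) := by
          apply mul_lt_mul_of_pos_left _ hn0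
          apply mul_lt_mul_of_pos_left hexp (by norm_num)
      _ = Real.exp (-δ/2) / 2 := by field_simp
  -- single marginal lower bound
  have hIio : ENNReal.ofReal (1 - B) ≤ gaussianReal μ v (Iio a) := by
    have hcomp : gaussianReal μ v (Iio a) = 1 - gaussianReal μ v (Ici a) := by
      rw [show Iio a = (Ici a)ᶜ from compl_Ici.symm,
        measure_compl measurableSet_Ici (measure_ne_top _ _), measure_univ]
    rw [hcomp, ← ENNReal.ofReal_one]
    calc ENNReal.ofReal (1 - B) = ENNReal.ofReal 1 - ENNReal.ofReal B :=
          ENNReal.ofReal_sub _ hB0.le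
      _ ≤ ENNReal.ofReal 1 - gaussianReal μ v (Ici a) := tsub_le_tsub_left htail _
  -- final real inequality
  set X : ℝ := Real.exp (-δ/2) with hXdef
  have hX0 : 0 < X := Real.exp_pos _
  have hX1 : X < 1 := by
    rw [hXdef, show (1:ℝ) = Real.exp 0 from (Real.exp_zero).symm]
    exact Real.exp_lt_exp.mpr (by linarith)
  have hfinal : Real.exp (-X) < (1 - B)^n := by
    have hbern : 1 + (n:ℝ) * (-B) ≤ (1 + (-B))^n := one_add_mul_le_pow (by nlinarith) n
    have h1 : 1 + X < Real.exp X := by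
      have := Real.add_one_lt_exp (ne_of_gt hX0)
      linarith
    have h2 : Real.exp (-X) < (1+X)⁻¹ := by
      rw [Real.exp_neg]
      apply inv_strictAnti₀ (by linarith) h1
    have h3 : (1+X)⁻¹ ≤ 1 - X/2 := by
      rw [inv_eq_one_div, div_le_iff₀ (by linarith : (0:ℝ) < 1+X)]
      nlinarith
    have h4 : 1 - X/2 < 1 - (n:ℝ)*B := by
      have : (n:ℝ)*B < X/2 := by rw [hXdef]; linarith [hnB]
      linarith
    calc Real.exp (-X) < (1+X)⁻¹ := h2
      _ ≤ 1 - X/2 := h3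
      _ < 1 - (n:ℝ)*B := h4
      _ = 1 + (n:ℝ) * (-B) := by ring
      _ ≤ (1 + (-B))^n := hbern
      _ = (1 - B)^n := by ring_nf
  -- assemble
  have hgoal_eq : σ * (2 * δ / Real.sqrt L + Real.sqrt (2 * L)) + μ + 1 = a + 1 := by
    rw [hadef, hcdef]
  rw [hgoal_eq]
  have hone_sub : (0:ℝ) ≤ 1 - B := by linarith
  calc ENNReal.ofReal (Real.exp (-X))
      < ENNReal.ofReal ((1-B)^n) := by
        rw [ENNReal.ofReal_lt_ofReal_iff (pow_pos (by linarith) n)]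
        exact hfinal
    _ = (ENNReal.ofReal (1-B))^n := ENNReal.ofReal_pow hone_sub n
    _ ≤ (gaussianReal μ v (Iio a))^n := pow_le_pow_left' hIio n
    _ = ∏ i ∈ Finset.range n, P (x i ⁻¹' (Iio a)) := by
        rw [Finset.prod_congr rfl (fun i _ => hmarg i), Finset.prod_const, Finset.card_range]
    _ = P (⋂ i ∈ Finset.range n, x i ⁻¹' (Iio a)) := hprod.symm
    _ ≤ P {ω | ∀ i < n, y i ω < a + 1} := measure_mono hsub
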